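/- Let G be a semiabelian p-group with a minimal decomposition G = AH. Then A ∩ H ⊆ A^p[A,H] ∩ Φ(H). -/

import Mathlib

open scoped Pointwise commutatorElement

/-- The minimal family of finite p-groups containing the trivial group, closed under
semidirect products with abelian p-groups, and closed under quotients. -/
inductive IsSemiabelianP (p : ℕ) : ∀ (G : Type) [Group G], Prop where
  | triv : IsSemiabelianP p PUnit
  | sdp {A H : Type} [CommGroup A] [Group H] [Finite A] [Finite H]
      (hA : IsPGroup p A) (hH' : IsPGroup p H)
      (φ : H →* MulAut A) (hH : IsSemiabelianP p H) : IsSemiabelianP p (A ⋊[φ] H)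
  | quot {G₁ G₂ : Type} [Group G₁] [Group G₂] [Finite G₁] (f : G₁ →* G₂)
      (hf : Function.Surjective f) (hG : IsSemiabelianP p G₁) : IsSemiabelianP p G₂

/-- `A^p[A,H]`: the subgroup generated by `p`-th powers of elements of `A`
together with commutators `[a,h]` for `a ∈ A`, `h ∈ H`. -/
def pPowComm (p : ℕ) {G : Type} [Group G] (A H : Subgroup G) : Subgroup G :=
  Subgroup.closure ({x | ∃ a ∈ A, x = a ^ p} ∪ {x | ∃ a ∈ A, ∃ h ∈ H, x = ⁅a, h⁆})

/-- A decomposition of `G`: an abelian normal subgroup `A` and a proper semiabelian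
subgroup `H` with `G = AH`. -/
structure IsDecomposition (p : ℕ) {G : Type} [Group G] (A H : Subgroup G) : Prop where
  normal : A.Normal
  comm : IsMulCommutative ↥A
  semi : IsSemiabelianP p ↥H
  proper : H ≠ ⊤
  prod : (A : Set G) * (H : Set G) = Set.univ

/-- A minimal decomposition of `G`: `A` is minimal among abelian normal subgroups
admitting a proper semiabelian complement, and `H` is minimal among semiabelian
subgroups with `G = AH`. -/
structure IsMinimalDecomposition (p : ℕ) {G : Type} [Group G] (A H : Subgroup G) : Prop
    extends IsDecomposition p A H where
  minA : ∀ B : Subgroup G, B < A → ¬ ∃ H' : Subgroup G, IsDecomposition p B H'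
  minH : ∀ H' : Subgroup G, H' < H → ¬ (IsSemiabelianP p ↥H' ∧
    (A : Set G) * (H' : Set G) = Set.univ)

namespace SemiabAux

open Subgroup

variable {X : Type} [Group X]

/-- Elements of a join `D ⊔ K` factor as products when `K` normalizes `D`. -/
lemma mem_sup_of_normalizes {D K : Subgroup X}
    (hn : ∀ k ∈ K, ∀ d ∈ D, k * d * k⁻¹ ∈ D) {g : X} (hg : g ∈ D ⊔ K) :
    ∃ d ∈ D, ∃ k ∈ K, g = d * k := by
  let P : Subgroup X :=
    { carrier := {g : X | ∃ d ∈ D, ∃ k ∈ K, g = d * k}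
      one_mem' := ⟨1, D.one_mem, 1, K.one_mem, by simp⟩
      mul_mem' := by
        rintro a b ⟨d₁, hd₁, k₁, hk₁, rfl⟩ ⟨d₂, hd₂, k₂, hk₂, rfl⟩
        refine ⟨d₁ * (k₁ * d₂ * k₁⁻¹), D.mul_mem hd₁ (hn k₁ hk₁ d₂ hd₂),
          k₁ * k₂, K.mul_mem hk₁ hk₂, by group⟩
      inv_mem' := by
        rintro a ⟨d, hd, k, hk, rfl⟩
        have h1 : k⁻¹ * d⁻¹ * (k⁻¹)⁻¹ ∈ D := hn k⁻¹ (K.inv_mem hk) d⁻¹ (D.inv_mem hd)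
        exact ⟨k⁻¹ * d⁻¹ * (k⁻¹)⁻¹, h1, k⁻¹, K.inv_mem hk, by group⟩ }
  have hle : D ⊔ K ≤ P := by
    refine sup_le (fun d hd => ⟨d, hd, 1, K.one_mem, by simp⟩)
      (fun k hk => ⟨1, D.one_mem, k, hk, by simp⟩)
  exact hle hg

instance instFiniteSemidirectProduct {N G : Type*} [Group N] [Group G] (φ : G →* MulAut N)
    [Finite N] [Finite G] : Finite (N ⋊[φ] G) :=
  Finite.of_injective (fun x => (x.left, x.right))
    (by rintro ⟨a, b⟩ ⟨c, d⟩ h; simp only [Prod.mk.injEq] at h; exact SemidirectProduct.ext h.1 h.2)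

lemma card_semidirectProduct {N G : Type*} [Group N] [Group G] (φ : G →* MulAut N) :
    Nat.card (N ⋊[φ] G) = Nat.card N * Nat.card G := by
  rw [← Nat.card_prod]
  exact Nat.card_congr ⟨fun x => (x.left, x.right), fun x => ⟨x.1, x.2⟩,
    fun x => rfl, fun x => rfl⟩

/-- Every semiabelian `p`-group is a `p`-group. -/
theorem isPGroup_of_semiab {p : ℕ} [Fact p.Prime] :
    ∀ {X : Type} [Group X], IsSemiabelianP p X → IsPGroup p X := by
  intro X _ h
  induction h with
  | triv => exact IsPGroup.of_card (n := 0) (by simp)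
  | @sdp A H _ _ _ _ hA hH' φ hH ih =>
      rw [IsPGroup.iff_card]
      obtain ⟨nA, hnA⟩ := IsPGroup.iff_card.mp hA
      obtain ⟨nH, hnH⟩ := IsPGroup.iff_card.mp hH'
      exact ⟨nA + nH, by rw [card_semidirectProduct, hnA, hnH, pow_add]⟩
  | quot f hf hG ih => exact ih.of_surjective f hf

end SemiabAux

namespace SemiabAux

open Subgroup

/-- An internal chain witnessing semiabelian structure. -/
inductive Chained {X : Type} [Group X] : Subgroup X → Prop
  | bot : Chained ⊥
  | step {A K H : Subgroup X} (hA : A ≤ H) (hK : K ≤ H)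
      (hcomm : ∀ a ∈ A, ∀ b ∈ A, a * b = b * a)
      (hnorm : ∀ h ∈ H, ∀ a ∈ A, h * a * h⁻¹ ∈ A)
      (hprod : ∀ g ∈ H, ∃ a ∈ A, ∃ k ∈ K, g = a * k)
      (hc : Chained K) : Chained H

lemma Chained.map {X Y : Type} [Group X] [Group Y] (f : X →* Y) {S : Subgroup X}
    (h : Chained S) : Chained (S.map f) := by
  induction h with
  | bot => rw [Subgroup.map_bot]; exact Chained.bot
  | @step A K H hA hK hcomm hnorm hprod hc ih =>
      refine Chained.step (Subgroup.map_mono hA) (Subgroup.map_mono hK) ?_ ?_ ?_ ih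
      · rintro _ ⟨a, ha, rfl⟩ _ ⟨b, hb, rfl⟩
        rw [← map_mul, ← map_mul, hcomm a ha b hb]
      · rintro _ ⟨h', hh', rfl⟩ _ ⟨a, ha, rfl⟩
        exact ⟨h' * a * h'⁻¹, hnorm h' hh' a ha, by simp⟩
      · rintro _ ⟨g, hg, rfl⟩
        obtain ⟨a, ha, k, hk, rfl⟩ := hprod g hg
        exact ⟨f a, Subgroup.mem_map_of_mem f ha, f k, Subgroup.mem_map_of_mem f hk, map_mul f a k⟩

/-- Semiabelian groups have full chains. -/
theorem chained_top_of_semiab {p : ℕ} :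
    ∀ {X : Type} [Group X], IsSemiabelianP p X → Chained (⊤ : Subgroup X) := by
  intro X _ h
  induction h with
  | triv =>
      have : (⊤ : Subgroup PUnit) = ⊥ := by
        ext x
        have : x = 1 := Subsingleton.elim x 1
        subst this
        simp
      rw [this]; exact Chained.bot
  | @sdp A H _ _ _ _ hA hH' φ hH ih =>
      refine Chained.step (A := (SemidirectProduct.inl : A →* A ⋊[φ] H).range)
        (K := (SemidirectProduct.inr : H →* A ⋊[φ] H).range) le_top le_top ?_ ?_ ?_ ?_
      · rintro _ ⟨a, rfl⟩ _ ⟨b, rfl⟩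
        rw [← map_mul, ← map_mul, mul_comm a b]
      · rintro h _ _ ⟨a, rfl⟩
        rw [SemidirectProduct.range_inl_eq_ker_rightHom] at *
        simp only [MonoidHom.mem_ker, map_mul, map_inv] at *
        simp [SemidirectProduct.rightHom_inl]
      · intro g _
        exact ⟨SemidirectProduct.inl g.left, ⟨g.left, rfl⟩,
          SemidirectProduct.inr g.right, ⟨g.right, rfl⟩,
          (SemidirectProduct.inl_left_mul_inr_right g).symm⟩
      · rw [MonoidHom.range_eq_map]
        exact ih.map _
  | quot f hf hG ih =>
      have : (⊤ : Subgroup _) = Subgroup.map f ⊤ := by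
        rw [← MonoidHom.range_eq_map, MonoidHom.range_eq_top.mpr hf]
      rw [this]
      exact ih.map f

end SemiabAux

namespace SemiabAux

open Subgroup
open scoped IsMulCommutative

variable {X : Type} [Group X]

/-- The conjugation action used to realize a chained subgroup as a semidirect quotient. -/
noncomputable def conjAction {A K H : Subgroup X} (hK : K ≤ H)
    (hnorm : ∀ h ∈ H, ∀ a ∈ A, h * a * h⁻¹ ∈ A) : ↥K →* MulAut ↥A where
  toFun k :=
    { toFun := fun a => ⟨(k : X) * a * (k : X)⁻¹, hnorm k (hK k.2) a a.2⟩
      invFun := fun a => ⟨(k : X)⁻¹ * a * (k : X), by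
        have := hnorm ((k : X)⁻¹) (H.inv_mem (hK k.2)) a a.2
        simpa using this⟩
      left_inv := fun a => by ext; simp [mul_assoc]
      right_inv := fun a => by ext; simp [mul_assoc]
      map_mul' := fun a b => by ext; simp [mul_assoc] }
  map_one' := by ext a; simp
  map_mul' := fun k l => by ext a; simp [mul_assoc]

@[simp] lemma conjAction_apply {A K H : Subgroup X} (hK : K ≤ H)
    (hnorm : ∀ h ∈ H, ∀ a ∈ A, h * a * h⁻¹ ∈ A) (k : ↥K) (a : ↥A) :
    ((conjAction hK hnorm k a : ↥A) : X) = (k : X) * a * (k : X)⁻¹ := rfl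

/-- Chained subgroups of a finite `p`-group are semiabelian. -/
theorem semiab_of_chained {p : ℕ} [Fact p.Prime] [Finite X] (hX : IsPGroup p X)
    {S : Subgroup X} (h : Chained S) : IsSemiabelianP p ↥S := by
  induction h with
  | bot =>
      refine IsSemiabelianP.quot (G₁ := PUnit) 1 ?_ IsSemiabelianP.triv
      intro y
      refine ⟨PUnit.unit, ?_⟩
      have : (y : X) = 1 := y.2
      exact Subtype.ext (by simp [this])
  | @step A K H hA hK hcomm hnorm hprod hc ih =>
      haveI : IsMulCommutative ↥A := ⟨⟨fun a b => Subtype.ext (hcomm a a.2 b b.2)⟩⟩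
      have hpA : IsPGroup p ↥A := hX.to_subgroup A
      have hpK : IsPGroup p ↥K := hX.to_subgroup K
      set φ := conjAction hK hnorm
      have hcompat : ∀ k : ↥K,
          (Subgroup.inclusion hA).comp (φ k).toMonoidHom =
            (MulAut.conj (Subgroup.inclusion hK k)).toMonoidHom.comp (Subgroup.inclusion hA) := by
        intro k
        ext a
        rfl
      have hsdp : IsSemiabelianP p (↥A ⋊[φ] ↥K) :=
        IsSemiabelianP.sdp hpA hpK φ ih
      refine IsSemiabelianP.quot
        (SemidirectProduct.lift (Subgroup.inclusion hA) (Subgroup.inclusion hK) hcompat) ?_ hsdp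
      intro y
      obtain ⟨a, ha, k, hk, hy⟩ := hprod (y : X) y.2
      refine ⟨⟨⟨a, ha⟩, ⟨k, hk⟩⟩, ?_⟩
      have : (⟨⟨a, ha⟩, ⟨k, hk⟩⟩ : ↥A ⋊[φ] ↥K) =
          SemidirectProduct.inl ⟨a, ha⟩ * SemidirectProduct.inr ⟨k, hk⟩ :=
        SemidirectProduct.mk_eq_inl_mul_inr _ _
      rw [this, map_mul, SemidirectProduct.lift_inl, SemidirectProduct.lift_inr]
      exact Subtype.ext (by simpa using hy.symm)

end SemiabAux

namespace SemiabAux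

open Subgroup

variable {p : ℕ} {X : Type} [Group X]

lemma coatom_normal [Finite X] [Fact p.Prime] (hX : IsPGroup p X) {M : Subgroup X}
    (hM : IsCoatom M) : M.Normal := by
  haveI : Group.IsNilpotent X := hX.isNilpotent
  exact Subgroup.NormalizerCondition.normal_of_coatom M normalizerCondition_of_isNilpotent hM

lemma coatom_quot_dichotomy {M : Subgroup X} [M.Normal] (hM : IsCoatom M)
    (S : Subgroup (X ⧸ M)) : S = ⊥ ∨ S = ⊤ := by
  have hker : M ≤ S.comap (QuotientGroup.mk' M) := by
    intro m hm
    simp only [Subgroup.mem_comap]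
    have : QuotientGroup.mk' M m = 1 := (QuotientGroup.eq_one_iff m).mpr hm
    rw [this]; exact S.one_mem
  have hsurj : Function.Surjective (QuotientGroup.mk' M) := QuotientGroup.mk'_surjective M
  have hmapcomap : (S.comap (QuotientGroup.mk' M)).map (QuotientGroup.mk' M) = S :=
    Subgroup.map_comap_eq_self_of_surjective hsurj S
  rcases eq_or_lt_of_le hker with heq | hlt
  · left
    rw [← hmapcomap, ← heq]
    rw [eq_bot_iff]
    rintro _ ⟨m, hm, rfl⟩
    simp only [Subgroup.mem_bot]
    exact (QuotientGroup.eq_one_iff m).mpr hm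
  · right
    have : S.comap (QuotientGroup.mk' M) = ⊤ := hM.2 _ hlt
    rw [← hmapcomap, this]
    exact Subgroup.map_top_of_surjective _ hsurj

lemma coatom_pow_mem [Finite X] [Fact p.Prime] (hX : IsPGroup p X) {M : Subgroup X}
    (hM : IsCoatom M) (g : X) : g ^ p ∈ M := by
  haveI := coatom_normal hX hM
  haveI : Nontrivial (X ⧸ M) := by
    obtain ⟨x, hx⟩ := SetLike.exists_of_lt (lt_top_iff_ne_top.mpr hM.1 : M < ⊤)
    exact ⟨⟨(x : X ⧸ M), 1, by
      simpa [QuotientGroup.eq_one_iff] using hx.2⟩⟩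
  set q : X ⧸ M := (g : X ⧸ M)
  rw [← QuotientGroup.eq_one_iff, QuotientGroup.mk_pow]
  by_contra hne
  -- ⟨q^p⟩ is not ⊥, hence ⊤
  have h1 : Subgroup.zpowers (q ^ p) ≠ ⊥ := by
    intro hb
    have := Subgroup.mem_zpowers (q ^ p)
    rw [hb, Subgroup.mem_bot] at this
    exact hne this
  have h2 : Subgroup.zpowers (q ^ p) = ⊤ :=
    (coatom_quot_dichotomy hM _).resolve_left h1
  -- but then q ∈ ⟨q^p⟩ and we get a cardinality contradiction
  have hqmem : q ∈ Subgroup.zpowers (q ^ p) := h2 ▸ Subgroup.mem_top q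
  have hle : Subgroup.zpowers q ≤ Subgroup.zpowers (q ^ p) := Subgroup.zpowers_le.mpr hqmem
  have hq1 : q ≠ 1 := by
    intro h
    exact hne (by rw [show (g : X ⧸ M) = q from rfl, h, one_pow])
  have hpq : IsPGroup p (X ⧸ M) := hX.to_quotient M
  obtain ⟨k, hk⟩ := hpq q
  have hdvd : orderOf q ∣ p ^ k := orderOf_dvd_of_pow_eq_one hk
  obtain ⟨j, hjk, hj⟩ := (Nat.dvd_prime_pow (Fact.out : p.Prime)).mp hdvd
  have hj0 : j ≠ 0 := by
    intro h
    apply hq1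
    have : orderOf q = 1 := by rw [hj, h, pow_zero]
    exact orderOf_eq_one_iff.mp this
  have hpdvd : p ∣ orderOf q := by
    rw [hj]
    exact dvd_pow_self p hj0
  have hcard1 : Nat.card (Subgroup.zpowers q) = orderOf q := Nat.card_zpowers q
  have hcard2 : Nat.card (Subgroup.zpowers (q ^ p)) = orderOf q / p := by
    rw [Nat.card_zpowers, orderOf_pow, Nat.gcd_eq_right hpdvd]
  have hmono : Nat.card (Subgroup.zpowers q) ≤ Nat.card (Subgroup.zpowers (q ^ p)) :=
    Subgroup.card_le_of_le hle
  rw [hcard1, hcard2] at hmono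
  have hpos : 0 < orderOf q := orderOf_pos q
  have hp1 : 1 < p := (Fact.out : p.Prime).one_lt
  exact absurd hmono (by
    have := Nat.div_lt_self hpos hp1
    omega)

lemma coatom_commutator_mem [Finite X] [Fact p.Prime] (hX : IsPGroup p X) {M : Subgroup X}
    (hM : IsCoatom M) (a b : X) : ⁅a, b⁆ ∈ M := by
  haveI := coatom_normal hX hM
  haveI : Nontrivial (X ⧸ M) := by
    obtain ⟨x, hx⟩ := SetLike.exists_of_lt (lt_top_iff_ne_top.mpr hM.1 : M < ⊤)
    exact ⟨⟨(x : X ⧸ M), 1, by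
      simpa [QuotientGroup.eq_one_iff] using hx.2⟩⟩
  have hpq : IsPGroup p (X ⧸ M) := hX.to_quotient M
  haveI : Nontrivial (Subgroup.center (X ⧸ M)) := hpq.center_nontrivial
  have hcen : Subgroup.center (X ⧸ M) = ⊤ := by
    refine (coatom_quot_dichotomy hM _).resolve_left ?_
    intro hb
    rw [hb] at this
    exact false_of_nontrivial_of_subsingleton ↥(⊥ : Subgroup (X ⧸ M))
  have hcomm : ∀ u v : X ⧸ M, u * v = v * u := by
    intro u v
    have : v ∈ Subgroup.center (X ⧸ M) := hcen ▸ Subgroup.mem_top v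
    exact Subgroup.mem_center_iff.mp this u
  rw [← QuotientGroup.eq_one_iff]
  have : ((⁅a, b⁆ : X) : X ⧸ M) = ⁅(a : X ⧸ M), (b : X ⧸ M)⁆ :=
    map_commutatorElement (QuotientGroup.mk' M) a b
  rw [this, commutatorElement_eq_one_iff_mul_comm]
  exact hcomm _ _

lemma mem_frattini_of_forall_coatom {x : X} (h : ∀ M : Subgroup X, IsCoatom M → x ∈ M) :
    x ∈ frattini X := by
  rw [frattini, Order.radical]
  simp only [Subgroup.mem_iInf, Set.mem_setOf_eq]
  exact fun M hM => h M hM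

lemma frattini_pow_mem [Finite X] [Fact p.Prime] (hX : IsPGroup p X) (g : X) :
    g ^ p ∈ frattini X :=
  mem_frattini_of_forall_coatom fun _ hM => coatom_pow_mem hX hM g

lemma frattini_commutator_mem [Finite X] [Fact p.Prime] (hX : IsPGroup p X) (a b : X) :
    ⁅a, b⁆ ∈ frattini X :=
  mem_frattini_of_forall_coatom fun _ hM => coatom_commutator_mem hX hM a b

end SemiabAux

namespace SemiabAux

open Subgroup

variable {p : ℕ} {V : Type} [Group V]

/-- In a finite "elementary abelian-like" group, subgroups have complements in overgroups. -/
lemma exists_complement [Finite V] (hp : p.Prime) (hVc : ∀ u v : V, u * v = v * u)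
    (hVp : ∀ v : V, v ^ p = 1) {F D : Subgroup V} (hFD : F ≤ D) :
    ∃ E : Subgroup V, E ≤ D ∧ E ⊓ F = ⊥ ∧ E ⊔ F = D := by
  haveI : Finite (Subgroup V) := Finite.of_injective _ SetLike.coe_injective
  have hnormalizes : ∀ (P Q : Subgroup V), ∀ k ∈ Q, ∀ d ∈ P, k * d * k⁻¹ ∈ P := by
    intro P Q k _ d hd
    have : k * d * k⁻¹ = d := by rw [hVc k d, mul_assoc, mul_inv_cancel, mul_one]
    rwa [this]
  obtain ⟨E, hE, hmax⟩ := Set.Finite.exists_maximalFor id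
    {E : Subgroup V | E ≤ D ∧ E ⊓ F = ⊥} (Set.toFinite _)
    ⟨⊥, bot_le, bot_inf_eq F⟩
  refine ⟨E, hE.1, hE.2, ?_⟩
  refine le_antisymm (sup_le hE.1 hFD) ?_
  by_contra hnle
  obtain ⟨d, hdD, hd⟩ := SetLike.not_le_iff_exists.mp hnle
  have hd1 : d ≠ 1 := fun h => hd (h ▸ (E ⊔ F).one_mem)
  set E' := E ⊔ Subgroup.zpowers d with hE'
  have hE'D : E' ≤ D := sup_le hE.1 (Subgroup.zpowers_le.mpr hdD)
  have hEE' : E ≤ E' := le_sup_left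
  have hdE' : d ∈ E' := (le_sup_right : Subgroup.zpowers d ≤ E') (Subgroup.mem_zpowers d)
  have hEne : E ≠ E' := by
    intro h
    exact hd (le_sup_left (a := E) (b := F) (h ▸ hdE'))
  have hE'F : E' ⊓ F ≠ ⊥ := by
    intro hbot
    exact hEne (le_antisymm hEE' (hmax ⟨hE'D, hbot⟩ hEE'))
  obtain ⟨y, hy, hy1⟩ : ∃ y ∈ E' ⊓ F, y ≠ 1 := by
    by_contra hall
    push_neg at hall
    exact hE'F ((Subgroup.eq_bot_iff_forall _).mpr hall)
  obtain ⟨e, he, z, hz, rfl⟩ :=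
    mem_sup_of_normalizes (hnormalizes E (Subgroup.zpowers d)) (hy.1 : _ ∈ E')
  obtain ⟨k, hk⟩ := Subgroup.mem_zpowers_iff.mp hz
  by_cases hz1 : z = 1
  · subst hz1
    rw [mul_one] at hy
    have : e ∈ E ⊓ F := ⟨he, hy.2⟩
    rw [hE.2, Subgroup.mem_bot] at this
    rw [mul_one] at hy1
    exact hy1 this
  -- z ≠ 1, so d is a power of z, hence d ∈ E ⊔ F, contradiction
  have hzEF : z ∈ E ⊔ F := by
    have : z = e⁻¹ * (e * z) := by group
    rw [this]
    exact Subgroup.mul_mem _ (le_sup_left (a := E) (b := F) (E.inv_mem he))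
      (le_sup_right (a := E) (b := F) hy.2)
  have hpk : ¬ ((p : ℤ) ∣ k) := by
    rintro ⟨m, rfl⟩
    apply hz1
    rw [← hk, zpow_mul, zpow_natCast, hVp d, one_zpow]
  have hgcd : Nat.gcd k.natAbs p = 1 := by
    rcases hp.eq_one_or_self_of_dvd _ (Nat.gcd_dvd_right k.natAbs p) with h | h
    · exact h
    · exfalso
      apply hpk
      have h1 : p ∣ k.natAbs := h ▸ Nat.gcd_dvd_left k.natAbs p
      exact Int.dvd_natAbs.mp (Int.natCast_dvd_natCast.mpr h1)
  have hdz : d ∈ Subgroup.zpowers z := by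
    have h1 : (1 : ℤ) = k * Int.gcdA k p + p * Int.gcdB k p := by
      have := Int.gcd_eq_gcd_ab k p
      rw [show Int.gcd k p = 1 from ?_] at this
      · exact_mod_cast this
      · unfold Int.gcd
        simpa using hgcd
    have : d = z ^ (Int.gcdA k p) := by
      calc d = d ^ (1 : ℤ) := by rw [zpow_one]
        _ = d ^ (k * Int.gcdA k p + p * Int.gcdB k p) := by rw [← h1]
        _ = (d ^ k) ^ (Int.gcdA k p) * (d ^ (p : ℤ)) ^ (Int.gcdB k p) := by
              rw [zpow_add, zpow_mul, zpow_mul]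
        _ = z ^ (Int.gcdA k p) := by
              rw [hk, zpow_natCast, hVp d, one_zpow, mul_one]
    rw [this]
    exact Subgroup.zpow_mem _ (Subgroup.mem_zpowers z) _
  exact hd (Subgroup.zpowers_le.mpr hzEF hdz)

end SemiabAux

namespace SemiabAux

open Subgroup

variable {p : ℕ} {X : Type} [Group X] [Finite X] [Fact p.Prime]

section Greedy

local notation "Φ" => frattini X
local notation "π" => QuotientGroup.mk' (frattini X)

lemma quot_comm (hX : IsPGroup p X) (u v : X ⧸ Φ) : u * v = v * u := by
  induction u using QuotientGroup.induction_on with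
  | H a =>
    induction v using QuotientGroup.induction_on with
    | H b =>
      change ((a * b : X) : X ⧸ Φ) = ((b * a : X) : X ⧸ Φ)
      rw [QuotientGroup.eq]
      have : (a * b)⁻¹ * (b * a) = ⁅b⁻¹, a⁻¹⁆ := by group
      rw [this]
      exact frattini_commutator_mem hX b⁻¹ a⁻¹

lemma quot_pow (hX : IsPGroup p X) (v : X ⧸ Φ) : v ^ p = 1 := by
  induction v using QuotientGroup.induction_on with
  | H a =>
    change ((a : X ⧸ Φ)) ^ p = 1
    rw [← QuotientGroup.mk_pow, QuotientGroup.eq_one_iff]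
    exact frattini_pow_mem hX a

lemma quot_conj (hX : IsPGroup p X) (u v : X ⧸ Φ) : u * v * u⁻¹ = v := by
  rw [quot_comm hX u v, mul_assoc, mul_inv_cancel, mul_one]

lemma sh_inter_comap {A : Subgroup X} {E : Subgroup (X ⧸ Φ)} (hE : E ≤ A.map π) :
    (A ⊓ Subgroup.comap π E).map π = E := by
  refine le_antisymm ?_ ?_
  · refine le_trans (Subgroup.map_mono inf_le_right) ?_
    rw [Subgroup.map_comap_eq,
      MonoidHom.range_eq_top.mpr (QuotientGroup.mk'_surjective _), top_inf_eq]
  · intro v hv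
    obtain ⟨a, ha, rfl⟩ := hE hv
    exact ⟨a, ⟨ha, by simpa using hv⟩, rfl⟩

/-- The greedy construction: a chained complement avoiding a prescribed shadow. -/
lemma greedy (hX : IsPGroup p X) {H' : Subgroup X} (h : Chained H') :
    ∀ S : Subgroup (X ⧸ Φ), ∃ K : Subgroup X, Chained K ∧ K ≤ H' ∧
      H'.map π ≤ S ⊔ K.map π ∧ (K.map π) ⊓ S = ⊥ := by
  induction h with
  | bot =>
      intro S
      exact ⟨⊥, Chained.bot, le_rfl, by simp [Subgroup.map_bot], by simp [Subgroup.map_bot]⟩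
  | @step A K₀ H₀ hA hK hcomm hnorm hprod hc ih =>
      intro S
      obtain ⟨E, hED, hEF, hEFsup⟩ := exists_complement (Fact.out : p.Prime) (quot_comm hX)
        (quot_pow hX) (inf_le_left : (A.map π) ⊓ S ≤ A.map π)
      set D : Subgroup X := A ⊓ Subgroup.comap π E with hD
      have hDA : D ≤ A := inf_le_left
      have hshD : D.map π = E := sh_inter_comap hED
      obtain ⟨K₁, hch₁, hK₁le, hcov₁, hdisj₁⟩ := ih (S ⊔ E)
      set K : Subgroup X := D ⊔ K₁ with hKdef
      have hnormD : ∀ h ∈ H₀, ∀ d ∈ D, h * d * h⁻¹ ∈ D := by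
        intro h hh d hd
        have hd' := Subgroup.mem_inf.mp hd
        refine Subgroup.mem_inf.mpr ⟨hnorm h hh d hd'.1, ?_⟩
        rw [Subgroup.mem_comap, map_mul, map_mul, map_inv, quot_conj hX]
        exact hd'.2
      have hKH₀ : K ≤ H₀ := sup_le (hDA.trans hA) (hK₁le.trans hK)
      have hchK : Chained K := by
        refine Chained.step (le_sup_left : D ≤ K) (le_sup_right : K₁ ≤ K)
          (fun a ha b hb => hcomm a (hDA ha) b (hDA hb))
          (fun h hh d hd => hnormD h (hKH₀ hh) d hd)
          (fun g hg => mem_sup_of_normalizes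
            (fun k hk d hd => hnormD k (hK₁le.trans hK (hk : k ∈ K₁)) d hd) hg) hch₁
      have hshK : K.map π = E ⊔ K₁.map π := by
        rw [hKdef, Subgroup.map_sup, hshD]
      refine ⟨K, hchK, hKH₀, ?_, ?_⟩
      · -- coverage
        have h1 : H₀.map π ≤ A.map π ⊔ K₀.map π := by
          rintro _ ⟨g, hg, rfl⟩
          obtain ⟨a, ha, k, hk, rfl⟩ := hprod g hg
          rw [map_mul]
          exact Subgroup.mul_mem _ (Subgroup.mem_sup_left (Subgroup.mem_map_of_mem _ ha))
            (Subgroup.mem_sup_right (Subgroup.mem_map_of_mem _ hk))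
        have h2 : A.map π ≤ S ⊔ K.map π := by
          rw [← hEFsup, hshK]
          refine sup_le ?_ ?_
          · exact le_sup_of_le_right le_sup_left
          · exact le_sup_of_le_left inf_le_right
        have h3 : K₀.map π ≤ S ⊔ K.map π := by
          refine hcov₁.trans ?_
          rw [hshK, sup_assoc]
        exact h1.trans (sup_le h2 h3)
      · -- disjointness
        rw [hshK, eq_bot_iff]
        rintro v ⟨hvK, hvS⟩
        obtain ⟨e, he, k₁, hk₁, rfl⟩ := mem_sup_of_normalizes
          (fun k _ d _ => by rw [quot_conj hX]; assumption) hvK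
        have hk₁' : k₁ ∈ (K₁.map π) ⊓ (S ⊔ E) := by
          constructor
          · exact hk₁
          · have : k₁ = e⁻¹ * (e * k₁) := by group
            rw [this]
            exact Subgroup.mul_mem _ (Subgroup.mem_sup_right (E.inv_mem he))
              (Subgroup.mem_sup_left hvS)
        rw [hdisj₁] at hk₁'
        have hk₁1 : k₁ = 1 := hk₁'
        subst hk₁1
        rw [mul_one] at hvS ⊢
        have : e ∈ E ⊓ ((A.map π) ⊓ S) := ⟨he, hED he, hvS⟩
        rw [hEF] at this
        exact this

end Greedy

end SemiabAux

namespace SemiabAux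

open Subgroup

variable {p : ℕ} {G : Type} [Group G] [Finite G] [Fact p.Prime]

lemma pow_mem_pPowComm {A H : Subgroup G} {a : G} (ha : a ∈ A) : a ^ p ∈ pPowComm p A H :=
  Subgroup.subset_closure (Or.inl ⟨a, ha, rfl⟩)

lemma commutator_mem_pPowComm {A H : Subgroup G} {a h : G} (ha : a ∈ A) (hh : h ∈ H) :
    ⁅a, h⁆ ∈ pPowComm p A H :=
  Subgroup.subset_closure (Or.inr ⟨a, ha, h, hh, rfl⟩)

lemma pPowComm_le {A H : Subgroup G} (hN : A.Normal) : pPowComm p A H ≤ A := by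
  rw [pPowComm, Subgroup.closure_le]
  rintro y (⟨a, ha, rfl⟩ | ⟨a, ha, h', _, rfl⟩)
  · exact A.pow_mem ha p
  · show ⁅a, h'⁆ ∈ (A : Set G)
    rw [commutatorElement_def]
    have heq : a * h' * a⁻¹ * h'⁻¹ = a * (h' * a⁻¹ * h'⁻¹) := by group
    rw [heq]
    exact A.mul_mem ha (hN.conj_mem _ (A.inv_mem ha) h')

/-- Part 1: `A ∩ H ≤ A^p[A,H]` for a minimal decomposition. -/
lemma part1 {A H : Subgroup G} (hmin : IsMinimalDecomposition p A H) {x : G}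
    (hxA : x ∈ A) (hxH : x ∈ H) : x ∈ pPowComm p A H := by
  by_contra hxB
  haveI hAcomm := hmin.comm
  have hAnormal := hmin.normal
  haveI : Finite (Subgroup G) := Finite.of_injective _ SetLike.coe_injective
  set B₀ := pPowComm p A H with hB₀
  have hB₀A : B₀ ≤ A := pPowComm_le hAnormal
  -- every subgroup between B₀ and A is normal in G
  have hDnorm : ∀ D : Subgroup G, B₀ ≤ D → D ≤ A → ∀ g : G, ∀ d ∈ D, g * d * g⁻¹ ∈ D := by
    intro D hBD hDA g d hd
    have hg : g ∈ (A : Set G) * (H : Set G) := by rw [hmin.prod]; trivial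
    obtain ⟨a, ha, h', hh', rfl⟩ := hg
    have hw : h' * d * h'⁻¹ ∈ D := by
      have heq : h' * d * h'⁻¹ = ⁅h', d⁆ * d := by group
      rw [heq]
      refine D.mul_mem (hBD ?_) hd
      rw [← commutatorElement_inv]
      exact B₀.inv_mem (commutator_mem_pPowComm (hDA hd) hh')
    have heq2 : (a * h') * d * (a * h')⁻¹ = a * (h' * d * h'⁻¹) * a⁻¹ := by group
    rw [heq2]
    have hcomm2 : a * (h' * d * h'⁻¹) = (h' * d * h'⁻¹) * a :=
      Subgroup.mul_comm_of_mem_isMulCommutative A ha (hDA hw)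
    rw [hcomm2, mul_assoc, mul_inv_cancel, mul_one]
    exact hw
  -- maximal subgroup between B₀ and A avoiding x
  obtain ⟨D, hD, hmaxD⟩ := Set.Finite.exists_maximalFor id
    {D : Subgroup G | B₀ ≤ D ∧ D ≤ A ∧ x ∉ D} (Set.toFinite _) ⟨B₀, le_rfl, hB₀A, hxB⟩
  obtain ⟨hBD, hDA, hxD⟩ := hD
  -- every element of A lies in D ⊔ ⟨x⟩
  have hcover : ∀ a ∈ A, a ∈ D ⊔ Subgroup.zpowers x := by
    intro a ha
    by_cases haD : a ∈ D
    · exact Subgroup.mem_sup_left haD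
    -- x ∈ D ⊔ zpowers a by maximality
    have hxE' : x ∈ D ⊔ Subgroup.zpowers a := by
      by_contra hxE'
      have hmem : (D ⊔ Subgroup.zpowers a) ∈
          {D : Subgroup G | B₀ ≤ D ∧ D ≤ A ∧ x ∉ D} :=
        ⟨hBD.trans le_sup_left, sup_le hDA (Subgroup.zpowers_le.mpr ha), hxE'⟩
      have heq : D = D ⊔ Subgroup.zpowers a := le_antisymm le_sup_left (hmaxD hmem le_sup_left)
      apply haD
      have : a ∈ D ⊔ Subgroup.zpowers a := Subgroup.mem_sup_right (Subgroup.mem_zpowers a)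
      rwa [← heq] at this
    obtain ⟨d, hd, z, hz, hxdz⟩ := mem_sup_of_normalizes
      (fun k _ d' hd' => hDnorm D hBD hDA k d' hd') hxE'
    obtain ⟨k, hk⟩ := Subgroup.mem_zpowers_iff.mp hz
    have hpk : ¬ ((p : ℤ) ∣ k) := by
      rintro ⟨m, rfl⟩
      apply hxD
      rw [hxdz]
      refine D.mul_mem hd ?_
      have : z ∈ D := by
        rw [← hk, zpow_mul, zpow_natCast]
        exact Subgroup.zpow_mem D (hBD (pow_mem_pPowComm ha)) m
      exact this
    have hgcd : Nat.gcd k.natAbs p = 1 := by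
      rcases (Fact.out : p.Prime).eq_one_or_self_of_dvd _ (Nat.gcd_dvd_right k.natAbs p)
        with h | h
      · exact h
      · exfalso
        apply hpk
        have h1 : p ∣ k.natAbs := h ▸ Nat.gcd_dvd_left k.natAbs p
        exact Int.dvd_natAbs.mp (Int.natCast_dvd_natCast.mpr h1)
    have h1 : (1 : ℤ) = k * Int.gcdA k p + p * Int.gcdB k p := by
      have := Int.gcd_eq_gcd_ab k p
      rw [show Int.gcd k p = 1 from ?_] at this
      · exact_mod_cast this
      · unfold Int.gcd
        simpa using hgcd
    have hzE : z ∈ D ⊔ Subgroup.zpowers x := by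
      have : z = d⁻¹ * x := by rw [hxdz]; group
      rw [this]
      exact Subgroup.mul_mem _ (Subgroup.mem_sup_left (D.inv_mem hd))
        (Subgroup.mem_sup_right (Subgroup.mem_zpowers x))
    have hapE : a ^ (p : ℤ) ∈ D ⊔ Subgroup.zpowers x := by
      rw [zpow_natCast]
      exact Subgroup.mem_sup_left (hBD (pow_mem_pPowComm ha))
    have haeq : a = (a ^ k) ^ (Int.gcdA k p) * (a ^ (p : ℤ)) ^ (Int.gcdB k p) := by
      rw [← zpow_mul, ← zpow_mul, ← zpow_add, ← h1, zpow_one]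
    rw [haeq]
    refine Subgroup.mul_mem _ ?_ (Subgroup.zpow_mem _ hapE _)
    rw [hk]
    exact Subgroup.zpow_mem _ hzE _
  -- build the smaller decomposition and contradict minimality of A
  have hDlt : D < A := lt_of_le_of_ne hDA (fun h => hxD (h ▸ hxA))
  refine hmin.minA D hDlt ⟨H, ?_, ?_, hmin.semi, hmin.proper, ?_⟩
  · exact ⟨fun d hd g => hDnorm D hBD hDA g d hd⟩
  · exact ⟨⟨fun a b => Subtype.ext
      (Subgroup.mul_comm_of_mem_isMulCommutative A (hDA a.2) (hDA b.2))⟩⟩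
  · rw [Set.eq_univ_iff_forall]
    intro g
    have hg : g ∈ (A : Set G) * (H : Set G) := by rw [hmin.prod]; trivial
    obtain ⟨a, ha, h', hh', rfl⟩ := hg
    obtain ⟨d, hd, z, hz, hadz⟩ := mem_sup_of_normalizes
      (fun k _ d' hd' => hDnorm D hBD hDA k d' hd') (hcover a ha)
    have hzH : z ∈ H := Subgroup.zpowers_le.mpr hxH hz
    refine Set.mem_mul.mpr ⟨d, hd, z * h', H.mul_mem hzH hh', ?_⟩
    rw [hadz]
    group

end SemiabAux

namespace SemiabAux

open Subgroup

variable {p : ℕ} {G : Type} [Group G] [Finite G] [Fact p.Prime]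

/-- Part 2: `A ∩ H ≤ Φ(H)` for a minimal decomposition of a semiabelian group. -/
lemma part2 (hG : IsSemiabelianP p G) {A H : Subgroup G}
    (hmin : IsMinimalDecomposition p A H) {x : G}
    (hxA : x ∈ A) (hxH : x ∈ H) : (⟨x, hxH⟩ : ↥H) ∈ frattini ↥H := by
  by_contra hxf
  have hAnormal := hmin.normal
  have hpG : IsPGroup p G := isPGroup_of_semiab hG
  have hpX : IsPGroup p (↥H) := hpG.to_subgroup H
  haveI : Finite (Subgroup ↥H) := Finite.of_injective _ SetLike.coe_injective
  set π : ↥H →* (↥H ⧸ frattini ↥H) := QuotientGroup.mk' (frattini ↥H) with hπ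
  set C : Subgroup ↥H := (A ⊓ H).subgroupOf H with hCdef
  have hxC : (⟨x, hxH⟩ : ↥H) ∈ C := by
    rw [hCdef, Subgroup.mem_subgroupOf]
    exact ⟨hxA, hxH⟩
  -- C is normal in ↥H
  have hCnorm : ∀ k : ↥H, ∀ c ∈ C, k * c * k⁻¹ ∈ C := by
    intro k c hc
    rw [hCdef, Subgroup.mem_subgroupOf] at hc ⊢
    exact ⟨hAnormal.conj_mem _ hc.1 k, Subgroup.mul_mem _ (Subgroup.mul_mem _ k.2 hc.2.out)
      (Subgroup.inv_mem _ k.2)⟩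
  have hchain : Chained (⊤ : Subgroup ↥H) := chained_top_of_semiab hmin.semi
  obtain ⟨K, hchK, -, hcov, hdisj⟩ := greedy hpX hchain (C.map π)
  have hmaptop : (⊤ : Subgroup ↥H).map π = ⊤ :=
    Subgroup.map_top_of_surjective _ (QuotientGroup.mk'_surjective _)
  -- K is proper
  have hKne : K ≠ ⊤ := by
    intro hK
    have hxbar : π ⟨x, hxH⟩ ∈ (K.map π) ⊓ (C.map π) := by
      constructor
      · rw [hK, hmaptop]; trivial
      · exact Subgroup.mem_map_of_mem _ hxC
    rw [hdisj, Subgroup.mem_bot] at hxbar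
    exact hxf ((QuotientGroup.eq_one_iff _).mp hxbar)
  -- C ⊔ K = ⊤
  have hjoin : C ⊔ K = ⊤ := by
    have htop : C.map π ⊔ K.map π = ⊤ :=
      top_le_iff.mp (hmaptop ▸ hcov)
    have h2 : (C ⊔ K).map π = ⊤ := by rw [Subgroup.map_sup, htop]
    have h3 : (C ⊔ K) ⊔ (frattini ↥H) = ⊤ := by
      have := Subgroup.comap_map_eq (f := π) (H := C ⊔ K)
      rw [h2, Subgroup.comap_top] at this
      have hker : π.ker = frattini ↥H := QuotientGroup.ker_mk' _
      rw [← hker]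
      exact this.symm
    exact frattini_nongenerating h3
  -- the image of K in G
  set H' : Subgroup G := K.map H.subtype with hH'def
  have hH'le : H' ≤ H := Subgroup.map_subtype_le K
  have hH'ne : H' ≠ H := by
    intro hEq
    apply hKne
    have htopmap : (⊤ : Subgroup ↥H).map H.subtype = H := by
      rw [← MonoidHom.range_eq_map, Subgroup.range_subtype]
    refine Subgroup.map_injective H.subtype_injective ?_
    rw [htopmap]
    exact hH'def.symm.trans hEq
  have hH'lt : H' < H := lt_of_le_of_ne hH'le hH'ne
  -- H' is semiabelian
  have hsemiK : IsSemiabelianP p ↥K := semiab_of_chained hpX hchK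
  have hsemiH' : IsSemiabelianP p ↥H' := by
    have hiso := Subgroup.equivMapOfInjective K H.subtype H.subtype_injective
    exact IsSemiabelianP.quot hiso.toMonoidHom hiso.surjective hsemiK
  -- A * H' = univ
  have hprod : (A : Set G) * (H' : Set G) = Set.univ := by
    rw [Set.eq_univ_iff_forall]
    intro g
    have hg : g ∈ (A : Set G) * (H : Set G) := by rw [hmin.prod]; trivial
    obtain ⟨a, ha, h', hh', rfl⟩ := hg
    have hfac : (⟨h', hh'⟩ : ↥H) ∈ C ⊔ K := by rw [hjoin]; trivial
    obtain ⟨c, hc, k, hk, hck⟩ := mem_sup_of_normalizes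
      (fun k _ c hc => hCnorm k c hc) hfac
    have hcA : (c : G) ∈ A := by
      rw [hCdef, Subgroup.mem_subgroupOf] at hc
      exact hc.1
    have hkH' : (k : G) ∈ H' := Subgroup.mem_map_of_mem _ hk
    refine Set.mem_mul.mpr ⟨a * (c : G), A.mul_mem ha hcA, (k : G), hkH', ?_⟩
    have : h' = (c : G) * (k : G) := by
      rw [show h' = ((⟨h', hh'⟩ : ↥H) : G) from rfl, hck]
      rfl
    rw [this]
    group
  exact hmin.minH H' hH'lt ⟨hsemiH', hprod⟩

end SemiabAux



/-- For a minimal decomposition `G = AH` of a semiabelian `p`-group,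
`A ∩ H ⊆ A^p[A,H] ∩ Φ(H)`. -/
theorem inf_le_of_minimalDecomposition (p : ℕ) [Fact p.Prime] (G : Type) [Group G]
    [Finite G] (hG : IsSemiabelianP p G) (A H : Subgroup G)
    (hmin : IsMinimalDecomposition p A H) :
    A ⊓ H ≤ pPowComm p A H ⊓ (frattini ↥H).map H.subtype := by
  intro x hx
  obtain ⟨hxA, hxH⟩ := Subgroup.mem_inf.mp hx
  refine Subgroup.mem_inf.mpr ⟨SemiabAux.part1 hmin hxA hxH, ?_⟩
  exact ⟨⟨x, hxH⟩, SemiabAux.part2 hG hmin hxA hxH, rfl⟩
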